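/- If A is an n×n X-matrix over a field K with det A ≠ 0, then its inverse A⁻¹ is also an X-matrix. Equivalently, the units of the ring of X-matrices are exactly the X-matrices that are invertible in the full matrix ring: 𝒳^× = GL(n,K) ∩ 𝒳. -/

import Mathlib

open Matrix Polynomial

/-- An `n × n` matrix is an X-matrix if every entry off the diagonal and off the
anti-diagonal (1-based: `i ≠ j` and `i + j ≠ n + 1`) vanishes. -/
def IsXMatrix {n : ℕ} {K : Type*} [Zero K] (A : Matrix (Fin n) (Fin n) K) : Prop :=
  ∀ i j : Fin n, i ≠ j → j ≠ i.rev → A i j = 0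

/-- The X-matrices form a subalgebra of the matrix algebra. -/
def xSubalgebra (n : ℕ) (K : Type*) [CommRing K] :
    Subalgebra K (Matrix (Fin n) (Fin n) K) where
  carrier := {A | IsXMatrix A}
  mul_mem' := by
    intro A B hA hB i j hij hrev
    show (A * B) i j = 0
    rw [Matrix.mul_apply]
    apply Finset.sum_eq_zero
    intro k _
    by_cases hk : A i k = 0
    · rw [hk, zero_mul]
    · have hk' : k = i ∨ k = i.rev := by
        by_contra h
        push_neg at h
        exact hk (hA i k (fun e => h.1 e.symm) h.2)
      rcases hk' with rfl | rfl
      · rw [hB k j hij hrev, mul_zero]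
      · rw [hB i.rev j (fun e => hrev e.symm) (by rw [Fin.rev_rev]; exact fun e => hij e.symm),
          mul_zero]
  add_mem' := by
    intro A B hA hB i j hij hrev
    show A i j + B i j = 0
    rw [hA i j hij hrev, hB i j hij hrev, add_zero]
  algebraMap_mem' := by
    intro r i j hij hrev
    show Matrix.diagonal _ i j = 0
    exact Matrix.diagonal_apply_ne _ (fun e => hij e)

theorem isXMatrix_of_mem_adjoin {n : ℕ} {K : Type*} [Field K]
    {A B : Matrix (Fin n) (Fin n) K} (hA : IsXMatrix A)
    (hB : B ∈ Algebra.adjoin K {A}) : IsXMatrix B := by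
  have h : Algebra.adjoin K {A} ≤ xSubalgebra n K :=
    Algebra.adjoin_le (Set.singleton_subset_iff.mpr hA)
  exact h hB

/-- If an X-matrix has nonzero determinant then its inverse is again an X-matrix;
equivalently, the units of the ring of X-matrices are exactly the invertible
X-matrices: any invertible X-matrix has a two-sided inverse inside the X-matrices. -/
theorem isXMatrix_inv {n : ℕ} {K : Type*} [Field K]
    (A : Matrix (Fin n) (Fin n) K) (hA : IsXMatrix A) (hdet : A.det ≠ 0) :
    IsXMatrix A⁻¹ ∧ A * A⁻¹ = 1 ∧ A⁻¹ * A = 1 := by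
  have hu : IsUnit A.det := isUnit_iff_ne_zero.mpr hdet
  refine ⟨?_, Matrix.mul_nonsing_inv A hu, Matrix.nonsing_inv_mul A hu⟩
  -- Cayley–Hamilton: A⁻¹ is a polynomial in A
  set p := A.charpoly with hp
  have hc : p.coeff 0 ≠ 0 := by
    intro h
    apply hdet
    rw [Matrix.det_eq_sign_charpoly_coeff, ← hp, h, mul_zero]
  have hCH : aeval A p = 0 := A.aeval_self_charpoly
  have hsplit : X * p.divX + C (p.coeff 0) = p := X_mul_divX_add p
  have key : A * aeval A p.divX = -(p.coeff 0) • 1 := by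
    have := congrArg (aeval A) hsplit
    rw [hCH, map_add, _root_.map_mul, aeval_X, aeval_C] at this
    have h2 : A * aeval A p.divX = -(algebraMap K (Matrix (Fin n) (Fin n) K) (p.coeff 0)) := by
      linear_combination (norm := noncomm_ring) this
    rw [h2, Algebra.algebraMap_eq_smul_one, neg_smul]
  have hinv : A⁻¹ = (-(p.coeff 0))⁻¹ • aeval A p.divX := by
    apply Matrix.inv_eq_right_inv
    rw [Matrix.mul_smul, key, smul_smul, inv_mul_cancel₀ (by simpa using hc), one_smul]
  rw [hinv]
  have hmem : (-(p.coeff 0))⁻¹ • aeval A p.divX ∈ Algebra.adjoin K {A} :=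
    Subalgebra.smul_mem _ (Algebra.adjoin_singleton_eq_range_aeval K A ▸ ⟨p.divX, rfl⟩) _
  exact isXMatrix_of_mem_adjoin hA hmem
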